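/- arXiv:0707.3344 — 4 statements merged into one kernel-verified Lean document; each statement's English description precedes it below -/
import Mathlib

section
/- Conversely, given real numbers K₀, K₁, K₂, K₃ with K₀ ≥ 0 and K₀² - K₁² - K₂² - K₃² ≥ 0, there exist complex 2-vectors φ₁, φ₂ ∈ ℂ² such that K₀ = |φ₁|² + |φ₂|², K₁ = 2 Re⟨φ₁, φ₂⟩, K₂ = 2 Im⟨φ₁, φ₂⟩, K₃ = |φ₁|² - |φ₂|². -/
open Finset

/-- Hermitian inner product on ℂ². -/
noncomputable def herm (a b : Fin 2 → ℂ) : ℂ := ∑ i, (starRingEnd ℂ) (a i) * b i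

theorem exists_fields_for_light_cone_point (K₀ K₁ K₂ K₃ : ℝ)
    (h0 : 0 ≤ K₀) (hlc : 0 ≤ K₀ ^ 2 - K₁ ^ 2 - K₂ ^ 2 - K₃ ^ 2) :
    ∃ φ₁ φ₂ : Fin 2 → ℂ,
      K₀ = (herm φ₁ φ₁).re + (herm φ₂ φ₂).re ∧
      K₁ = 2 * (herm φ₁ φ₂).re ∧
      K₂ = 2 * (herm φ₁ φ₂).im ∧
      K₃ = (herm φ₁ φ₁).re - (herm φ₂ φ₂).re := by
  have hsum : 0 ≤ K₀ + K₃ := by nlinarith [sq_nonneg K₁, sq_nonneg K₂, sq_nonneg (K₀ + K₃)]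
  rcases eq_or_lt_of_le hsum with heq | hpos
  · -- K₀ + K₃ = 0
    have hK3 : K₃ = -K₀ := by linarith
    have h1 : K₁ = 0 := by nlinarith [sq_nonneg K₁, sq_nonneg K₂]
    have h2 : K₂ = 0 := by nlinarith [sq_nonneg K₁, sq_nonneg K₂]
    refine ⟨![0, 0], ![(Real.sqrt K₀ : ℂ), 0], ?_, ?_, ?_, ?_⟩ <;>
      simp [herm, Fin.sum_univ_two, h1, h2, hK3, ← Complex.ofReal_mul,
        Real.mul_self_sqrt h0]
  · -- K₀ + K₃ > 0
    set a : ℝ := Real.sqrt ((K₀ + K₃) / 2) with ha_def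
    have ha2 : a ^ 2 = (K₀ + K₃) / 2 := Real.sq_sqrt (by linarith)
    have ha_pos : 0 < a := Real.sqrt_pos.mpr (by linarith)
    set r : ℝ := (K₀ - K₃) / 2 - (K₁ ^ 2 + K₂ ^ 2) / (2 * (K₀ + K₃)) with hr_def
    have hr : 0 ≤ r := by
      rw [hr_def, sub_nonneg, div_le_div_iff₀ (by linarith) (by norm_num)]
      nlinarith
    set d : ℝ := Real.sqrt r with hd_def
    have hd2 : d ^ 2 = r := Real.sq_sqrt hr
    have hd2' : d ^ 2 * (2 * (K₀ + K₃)) = (K₀ - K₃) * (K₀ + K₃) - (K₁ ^ 2 + K₂ ^ 2) := by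
      rw [hd2, hr_def]; field_simp
    set p : ℝ := K₁ / (2 * a) with hp_def
    set q : ℝ := K₂ / (2 * a) with hq_def
    refine ⟨![(a : ℂ), 0], ![(p : ℂ) + (q : ℂ) * Complex.I, (d : ℂ)], ?_, ?_, ?_, ?_⟩ <;>
      · simp only [herm, Fin.sum_univ_two, Matrix.cons_val_zero, Matrix.cons_val_one,
          Matrix.head_cons, Complex.conj_ofReal, map_add, map_mul, Complex.conj_I,
          Complex.add_re, Complex.add_im, Complex.mul_re, Complex.mul_im,
          Complex.ofReal_re, Complex.ofReal_im, Complex.I_re, Complex.I_im,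
          Complex.zero_re, Complex.zero_im, Complex.sub_re, Complex.sub_im,
          Complex.neg_re, Complex.neg_im, map_zero]
        ring_nf
        try simp only [inv_pow, ha2, hd2, hr_def]
        field_simp
        try ring_nf
        have ha0 : a ≠ 0 := ha_pos.ne'
        simp only [hp_def, hq_def, div_pow, mul_pow, ha2]
        field_simp
        try ring_nf
end

section
/- Let ξ, η ∈ ℝ³ and E a real symmetric 3×3 matrix. If there exists R ∈ SO(3) such that (Rξ)₂ = 0, (Rη)₂ = 0, and (R E Rᵀ)₁₂ = (R E Rᵀ)₂₃ = 0, then the four invariants vanish: (ξ×η)ᵀEξ = 0, (ξ×η)ᵀEη = 0, (ξ×(Eξ))ᵀE²ξ = 0, (η×(Eη))ᵀE²η = 0. -/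
open Matrix

lemma det_col1_zero (a b c : Fin 3 → ℝ) (ha : a 1 = 0) (hb : b 1 = 0)
    (hc : c 1 = 0) : Matrix.det ![a, b, c] = 0 := by
  show Matrix.det (Matrix.of ![a, b, c]) = 0
  rw [Matrix.det_fin_three]
  simp [ha, hb, hc]

lemma det_rot (R : Matrix (Fin 3) (Fin 3) ℝ) (hdet : R.det = 1)
    (a b c : Fin 3 → ℝ) :
    Matrix.det ![R.mulVec a, R.mulVec b, R.mulVec c] = Matrix.det ![a, b, c] := by
  have h : (Matrix.of ![R.mulVec a, R.mulVec b, R.mulVec c]) =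
      Matrix.of ![a, b, c] * Rᵀ := by
    ext i j
    fin_cases i <;>
      simp [Matrix.mul_apply, Matrix.mulVec, dotProduct, mul_comm]
  show Matrix.det (Matrix.of ![R.mulVec a, R.mulVec b, R.mulVec c]) =
      Matrix.det (Matrix.of ![a, b, c])
  rw [h, Matrix.det_mul, Matrix.det_transpose, hdet, mul_one]

theorem invariants_vanish_of_exists_CP_basis
    (ξ η : Fin 3 → ℝ) (E : Matrix (Fin 3) (Fin 3) ℝ) (hE : E.IsSymm)
    (h : ∃ R : Matrix (Fin 3) (Fin 3) ℝ, R * Rᵀ = 1 ∧ R.det = 1 ∧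
      R.mulVec ξ 1 = 0 ∧ R.mulVec η 1 = 0 ∧
      (R * E * Rᵀ) 0 1 = 0 ∧ (R * E * Rᵀ) 1 2 = 0) :
    (ξ ⨯₃ η) ⬝ᵥ E.mulVec ξ = 0 ∧
    (ξ ⨯₃ η) ⬝ᵥ E.mulVec η = 0 ∧
    (ξ ⨯₃ E.mulVec ξ) ⬝ᵥ (E * E).mulVec ξ = 0 ∧
    (η ⨯₃ E.mulVec η) ⬝ᵥ (E * E).mulVec η = 0 := by
  obtain ⟨R, hR, hdet, hξ1, hη1, hF01, hF12⟩ := h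
  set F := R * E * Rᵀ with hFdef
  set u := R.mulVec ξ with hu
  set v := R.mulVec η with hv
  have hRtR : Rᵀ * R = 1 := mul_eq_one_comm.mp hR
  -- F is symmetric
  have hFsymm : Fᵀ = F := by
    have hEs : Eᵀ = E := hE
    rw [hFdef, Matrix.transpose_mul, Matrix.transpose_mul, Matrix.transpose_transpose,
      hEs, Matrix.mul_assoc]
  have hF10 : F 1 0 = 0 := by
    rw [show F 1 0 = Fᵀ 0 1 from rfl, hFsymm]; exact hF01
  -- transforms of E·ξ etc.
  have hEξ : R.mulVec (E.mulVec ξ) = F.mulVec u := by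
    simp only [hu, Matrix.mulVec_mulVec, hFdef, Matrix.mul_assoc, hRtR, Matrix.mul_one]
  have hEη : R.mulVec (E.mulVec η) = F.mulVec v := by
    simp only [hv, Matrix.mulVec_mulVec, hFdef, Matrix.mul_assoc, hRtR, Matrix.mul_one]
  have hFF : F * F * R = R * (E * E) := by
    have h2 : F * F * R = R * E * (Rᵀ * R) * E * (Rᵀ * R) := by
      rw [hFdef]; noncomm_ring
    rw [h2, hRtR, Matrix.mul_one, Matrix.mul_one, Matrix.mul_assoc]
  have hE2ξ : R.mulVec ((E * E).mulVec ξ) = (F * F).mulVec u := by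
    rw [hu, Matrix.mulVec_mulVec, Matrix.mulVec_mulVec, hFF]
  have hE2η : R.mulVec ((E * E).mulVec η) = (F * F).mulVec v := by
    rw [hv, Matrix.mulVec_mulVec, Matrix.mulVec_mulVec, hFF]
  -- second components vanish
  have hFu1 : (F.mulVec u) 1 = 0 := by
    simp [Matrix.mulVec, dotProduct, Fin.sum_univ_three, hF10, hF12, hξ1, ← hu]
  have hFv1 : (F.mulVec v) 1 = 0 := by
    simp [Matrix.mulVec, dotProduct, Fin.sum_univ_three, hF10, hF12, hη1, ← hv]
  have hF2u1 : ((F * F).mulVec u) 1 = 0 := by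
    simp [Matrix.mulVec, Matrix.mul_apply, dotProduct, Fin.sum_univ_three,
      hF10, hF12, hξ1, ← hu]
  have hF2v1 : ((F * F).mulVec v) 1 = 0 := by
    simp [Matrix.mulVec, Matrix.mul_apply, dotProduct, Fin.sum_univ_three,
      hF10, hF12, hη1, ← hv]
  have hu1 : u 1 = 0 := hξ1
  have hv1 : v 1 = 0 := hη1
  refine ⟨?_, ?_, ?_, ?_⟩
  · rw [dotProduct_comm, triple_product_eq_det,
      ← det_rot R hdet, hEξ, ← hu, ← hv]
    exact det_col1_zero _ _ _ hFu1 hu1 hv1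
  · rw [dotProduct_comm, triple_product_eq_det,
      ← det_rot R hdet, hEη, ← hu, ← hv]
    exact det_col1_zero _ _ _ hFv1 hu1 hv1
  · rw [dotProduct_comm, triple_product_eq_det,
      ← det_rot R hdet, hE2ξ, hEξ, ← hu]
    exact det_col1_zero _ _ _ hF2u1 hu1 hFu1
  · rw [dotProduct_comm, triple_product_eq_det,
      ← det_rot R hdet, hE2η, hEη, ← hv]
    exact det_col1_zero _ _ _ hF2v1 hv1 hFv1
end

section
/- Let ξ, η ∈ ℝ³ and E a real symmetric 3×3 matrix. If (ξ×η)ᵀEξ = 0, (ξ×η)ᵀEη = 0, (ξ×(Eξ))ᵀE²ξ = 0, and (η×(Eη))ᵀE²η = 0, then there exists R ∈ SO(3) such that (Rξ)₂ = 0, (Rη)₂ = 0, and (R E Rᵀ)₁₂ = (R E Rᵀ)₂₃ = 0. -/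
open Matrix

infixl:74 " ×₃ " => crossProduct

private lemma row1_rotation' (u : Fin 3 → ℝ) (hu : u ⬝ᵥ u = 1) :
    ∃ R : Matrix (Fin 3) (Fin 3) ℝ, R * Rᵀ = 1 ∧ R.det = 1 ∧ R 1 = u := by
  obtain ⟨w, hw, hwu⟩ : ∃ w : Fin 3 → ℝ, w ⬝ᵥ w = 1 ∧ w ⬝ᵥ u = 0 := by
    by_cases h : u 0 = 0 ∧ u 2 = 0
    · exact ⟨![1, 0, 0], by simp [dotProduct, Fin.sum_univ_three], by
        simp [dotProduct, Fin.sum_univ_three, h.1]⟩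
    · have hs : u 0 ^ 2 + u 2 ^ 2 > 0 := by
        rcases not_and_or.mp h with h' | h' <;> positivity
      have hs0 : Real.sqrt (u 0 ^ 2 + u 2 ^ 2) > 0 := Real.sqrt_pos.mpr hs
      have hs2 : Real.sqrt (u 0 ^ 2 + u 2 ^ 2) ^ 2 = u 0 ^ 2 + u 2 ^ 2 := Real.sq_sqrt hs.le
      refine ⟨![u 2 / Real.sqrt (u 0 ^ 2 + u 2 ^ 2), 0, -(u 0) / Real.sqrt (u 0 ^ 2 + u 2 ^ 2)], ?_, ?_⟩
      · simp only [dotProduct, Fin.sum_univ_three, Matrix.cons_val_zero, Matrix.cons_val_one,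
          Matrix.head_cons, Matrix.cons_val_two, Matrix.tail_cons]
        have key : u 2 / Real.sqrt (u 0 ^ 2 + u 2 ^ 2) * (u 2 / Real.sqrt (u 0 ^ 2 + u 2 ^ 2)) +
            0 * 0 + -(u 0) / Real.sqrt (u 0 ^ 2 + u 2 ^ 2) * (-(u 0) / Real.sqrt (u 0 ^ 2 + u 2 ^ 2)) =
            (u 0 ^ 2 + u 2 ^ 2) / Real.sqrt (u 0 ^ 2 + u 2 ^ 2) ^ 2 := by ring
        rw [key, hs2, div_self (ne_of_gt hs)]
      · simp only [dotProduct, Fin.sum_univ_three, Matrix.cons_val_zero, Matrix.cons_val_one,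
          Matrix.head_cons, Matrix.cons_val_two, Matrix.tail_cons]
        field_simp
        ring
  simp only [dotProduct, Fin.sum_univ_three] at hu hw hwu
  refine ⟨!![w 0, w 1, w 2; u 0, u 1, u 2;
      w 1 * u 2 - w 2 * u 1, w 2 * u 0 - w 0 * u 2, w 0 * u 1 - w 1 * u 0], ?_, ?_, ?_⟩
  · ext i j
    simp only [Matrix.mul_apply, Matrix.transpose_apply, Fin.sum_univ_three]
    fin_cases i <;> fin_cases j <;> simp [Matrix.one_apply] <;>
      first
        | ring1
        | linear_combination hw
        | linear_combination hu
        | linear_combination hwu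
        | linear_combination -hw
        | linear_combination -hu
        | linear_combination -hwu
        | linear_combination (u 0 * u 0 + u 1 * u 1 + u 2 * u 2) * hw + hu - (w 0 * u 0 + w 1 * u 1 + w 2 * u 2) * hwu
        | linear_combination -((u 0 * u 0 + u 1 * u 1 + u 2 * u 2) * hw + hu - (w 0 * u 0 + w 1 * u 1 + w 2 * u 2) * hwu)
  · simp [Matrix.det_fin_three]
    first
      | linear_combination (u 0 * u 0 + u 1 * u 1 + u 2 * u 2) * hw + hu - (w 0 * u 0 + w 1 * u 1 + w 2 * u 2) * hwu
      | linear_combination -((u 0 * u 0 + u 1 * u 1 + u 2 * u 2) * hw + hu - (w 0 * u 0 + w 1 * u 1 + w 2 * u 2) * hwu)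
  · funext j
    fin_cases j <;> simp

private lemma reduce_lemma' (ξ η : Fin 3 → ℝ) (E : Matrix (Fin 3) (Fin 3) ℝ) (hE : E.IsSymm)
    (u : Fin 3 → ℝ) (c : ℝ) (hu : u ⬝ᵥ u = 1) (heig : E.mulVec u = c • u)
    (hξ : u ⬝ᵥ ξ = 0) (hη : u ⬝ᵥ η = 0) :
    ∃ R : Matrix (Fin 3) (Fin 3) ℝ, R * Rᵀ = 1 ∧ R.det = 1 ∧
      R.mulVec ξ 1 = 0 ∧ R.mulVec η 1 = 0 ∧
      (R * E * Rᵀ) 0 1 = 0 ∧ (R * E * Rᵀ) 1 2 = 0 := by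
  obtain ⟨R, hRo, hRd, hR1⟩ := row1_rotation' u hu
  have hEu : ∀ k, ∑ l, E k l * u l = c * u k := by
    intro k
    have := congrFun heig k
    simpa [mulVec, dotProduct] using this
  have hEu' : ∀ k, ∑ j, u j * E j k = c * u k := by
    have hv : u ᵥ* E = c • u := by
      rw [← hE.eq, Matrix.vecMul_transpose, heig]
    intro k
    have := congrFun hv k
    simpa [vecMul, dotProduct] using this
  have h01 : ∑ k, R 0 k * u k = 0 := by
    have := congrFun (congrFun hRo 0) 1
    simpa [mul_apply, transpose_apply, Matrix.one_apply, hR1] using this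
  have h12 : ∑ k, u k * R 2 k = 0 := by
    have := congrFun (congrFun hRo 1) 2
    simp only [mul_apply, transpose_apply, Matrix.one_apply, hR1] at this
    simpa using this
  refine ⟨R, hRo, hRd, ?_, ?_, ?_, ?_⟩
  · show ∑ k, R 1 k * ξ k = 0
    rw [hR1] at *
    simpa [dotProduct] using hξ
  · show ∑ k, R 1 k * η k = 0
    rw [hR1] at *
    simpa [dotProduct] using hη
  · show ∑ k, (∑ j, R 0 j * E j k) * Rᵀ k 1 = 0
    simp only [transpose_apply, hR1, Fin.sum_univ_three] at *
    linear_combination R 0 0 * hEu 0 + R 0 1 * hEu 1 + R 0 2 * hEu 2 + c * h01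
  · show ∑ k, (∑ j, R 1 j * E j k) * Rᵀ k 2 = 0
    simp only [transpose_apply, hR1, Fin.sum_univ_three] at *
    linear_combination R 2 0 * hEu' 0 + R 2 1 * hEu' 1 + R 2 2 * hEu' 2 + c * h12

private lemma parallel_of_cross_eq_zero' (v p : Fin 3 → ℝ) (hp : p ≠ 0) (h : v ×₃ p = 0) :
    ∃ k : ℝ, v = k • p := by
  have h0 := congrFun h 0
  have h1 := congrFun h 1
  have h2 := congrFun h 2
  simp [crossProduct] at h0 h1 h2
  have hpk : p 0 ≠ 0 ∨ p 1 ≠ 0 ∨ p 2 ≠ 0 := by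
    by_contra hc
    push_neg at hc
    exact hp (funext fun i => by fin_cases i <;> simp [hc.1, hc.2.1, hc.2.2])
  rcases hpk with hk | hk | hk
  · refine ⟨v 0 / p 0, funext fun i => ?_⟩
    fin_cases i <;> simp [Pi.smul_apply, smul_eq_mul] <;> field_simp <;> linarith [h1, h2, h0]
  · refine ⟨v 1 / p 1, funext fun i => ?_⟩
    fin_cases i <;> simp [Pi.smul_apply, smul_eq_mul] <;> field_simp <;> linarith [h1, h2, h0]
  · refine ⟨v 2 / p 2, funext fun i => ?_⟩
    fin_cases i <;> simp [Pi.smul_apply, smul_eq_mul] <;> field_simp <;> linarith [h1, h2, h0]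

private lemma normalize_lemma' (E : Matrix (Fin 3) (Fin 3) ℝ) (u : Fin 3 → ℝ) (c : ℝ)
    (x y : Fin 3 → ℝ)
    (hu : u ⬝ᵥ u ≠ 0) (heig : E.mulVec u = c • u) (hx : u ⬝ᵥ x = 0) (hy : u ⬝ᵥ y = 0) :
    ∃ u' : Fin 3 → ℝ, u' ⬝ᵥ u' = 1 ∧ E.mulVec u' = c • u' ∧ u' ⬝ᵥ x = 0 ∧ u' ⬝ᵥ y = 0 := by
  have hpos : 0 < u ⬝ᵥ u := by
    rcases lt_or_eq_of_le (show 0 ≤ u ⬝ᵥ u by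
      simp only [dotProduct, Fin.sum_univ_three]
      nlinarith [sq_nonneg (u 0), sq_nonneg (u 1), sq_nonneg (u 2)]) with h | h
    · exact h
    · exact absurd h.symm hu
  set s := Real.sqrt (u ⬝ᵥ u) with hs
  have hs0 : s ≠ 0 := ne_of_gt (Real.sqrt_pos.mpr hpos)
  have hs2 : s ^ 2 = u ⬝ᵥ u := Real.sq_sqrt hpos.le
  refine ⟨s⁻¹ • u, ?_, ?_, ?_, ?_⟩
  · rw [smul_dotProduct, dotProduct_smul, smul_eq_mul, smul_eq_mul, ← hs2]
    field_simp
  · rw [mulVec_smul, heig, smul_comm]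
  · rw [smul_dotProduct, hx, smul_zero]
  · rw [smul_dotProduct, hy, smul_zero]

private lemma same_eig_case' (E : Matrix (Fin 3) (Fin 3) ℝ) (ξ vi vj : Fin 3 → ℝ) (l : ℝ)
    (hvi : E.mulVec vi = l • vi) (hvj : E.mulVec vj = l • vj)
    (hii : vi ⬝ᵥ vi = 1) (hjj : vj ⬝ᵥ vj = 1) (hij : vi ⬝ᵥ vj = 0) :
    ∃ (u : Fin 3 → ℝ) (c : ℝ), u ⬝ᵥ u ≠ 0 ∧ E.mulVec u = c • u ∧ u ⬝ᵥ ξ = 0 := by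
  by_cases hci : vi ⬝ᵥ ξ = 0
  · exact ⟨vi, l, by rw [hii]; exact one_ne_zero, hvi, hci⟩
  · set ci := vi ⬝ᵥ ξ with hcidef
    set cj := vj ⬝ᵥ ξ with hcjdef
    refine ⟨cj • vi - ci • vj, l, ?_, ?_, ?_⟩
    · have hdd : (cj • vi - ci • vj) ⬝ᵥ (cj • vi - ci • vj) = ci ^ 2 + cj ^ 2 := by
        simp only [sub_dotProduct, dotProduct_sub, smul_dotProduct, dotProduct_smul,
          smul_eq_mul, hii, hjj, hij, dotProduct_comm vj vi]
        ring
      rw [hdd]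
      have : ci ^ 2 > 0 := by positivity
      nlinarith [sq_nonneg cj]
    · rw [mulVec_sub, mulVec_smul, mulVec_smul, hvi, hvj, smul_sub, smul_comm l cj, smul_comm l ci]
    · simp only [sub_dotProduct, smul_dotProduct, smul_eq_mul, ← hcidef, ← hcjdef]
      ring

private lemma key_identity' (v0 v1 v2 : Fin 3 → ℝ) (c0 c1 c2 l0 l1 l2 : ℝ) :
    ((c0 • v0 + c1 • v1 + c2 • v2) ×₃ ((c0 * l0) • v0 + (c1 * l1) • v1 + (c2 * l2) • v2)) ⬝ᵥ
      ((c0 * l0 ^ 2) • v0 + (c1 * l1 ^ 2) • v1 + (c2 * l2 ^ 2) • v2) =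
    c0 * c1 * c2 * ((l0 - l1) * (l1 - l2) * (l2 - l0)) * ((v0 ×₃ v1) ⬝ᵥ v2) := by
  simp only [crossProduct, dotProduct, Fin.sum_univ_three, Pi.add_apply, Pi.smul_apply,
    smul_eq_mul, Matrix.cons_val_zero, Matrix.cons_val_one, Matrix.head_cons,
    Matrix.cons_val_two, Matrix.tail_cons, LinearMap.mk₂_apply]
  ring

private lemma exists_unit_eigen_perp' (E : Matrix (Fin 3) (Fin 3) ℝ) (hE : E.IsSymm)
    (ξ : Fin 3 → ℝ) (h3 : (ξ ×₃ E.mulVec ξ) ⬝ᵥ (E * E).mulVec ξ = 0) :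
    ∃ (u : Fin 3 → ℝ) (c : ℝ), u ⬝ᵥ u = 1 ∧ E.mulVec u = c • u ∧ u ⬝ᵥ ξ = 0 := by
  have main : ∃ (u : Fin 3 → ℝ) (c : ℝ), u ⬝ᵥ u ≠ 0 ∧ E.mulVec u = c • u ∧ u ⬝ᵥ ξ = 0 := by
    have hH : E.IsHermitian := by unfold Matrix.IsHermitian; simpa using hE.eq
    set b := hH.eigenvectorBasis with hb
    set lam := hH.eigenvalues with hlam
    set v : Fin 3 → Fin 3 → ℝ := fun i => b i with hv
    have heig : ∀ i, E.mulVec (v i) = lam i • v i := fun i => hH.mulVec_eigenvectorBasis i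
    have orth : ∀ i j, v i ⬝ᵥ v j = if i = j then 1 else 0 := by
      intro i j
      have := orthonormal_iff_ite.mp b.orthonormal i j
      simpa [PiLp.inner_apply, dotProduct, hv, mul_comm] using this
    have o00 : v 0 ⬝ᵥ v 0 = 1 := by simpa using orth 0 0
    have o11 : v 1 ⬝ᵥ v 1 = 1 := by simpa using orth 1 1
    have o22 : v 2 ⬝ᵥ v 2 = 1 := by simpa using orth 2 2
    have o01 : v 0 ⬝ᵥ v 1 = 0 := by simpa using orth 0 1
    have o02 : v 0 ⬝ᵥ v 2 = 0 := by simpa using orth 0 2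
    have o12 : v 1 ⬝ᵥ v 2 = 0 := by simpa using orth 1 2
    by_cases h01 : lam 0 = lam 1
    · exact same_eig_case' E ξ (v 0) (v 1) (lam 0) (heig 0) (h01 ▸ heig 1) o00 o11 o01
    by_cases h02 : lam 0 = lam 2
    · exact same_eig_case' E ξ (v 0) (v 2) (lam 0) (heig 0) (h02 ▸ heig 2) o00 o22 o02
    by_cases h12 : lam 1 = lam 2
    · exact same_eig_case' E ξ (v 1) (v 2) (lam 1) (heig 1) (h12 ▸ heig 2) o11 o22 o12
    -- all eigenvalues distinct
    set c0 := v 0 ⬝ᵥ ξ with hc0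
    set c1 := v 1 ⬝ᵥ ξ with hc1
    set c2 := v 2 ⬝ᵥ ξ with hc2
    have expand : ∀ k, ξ k = ∑ i, (v i ⬝ᵥ ξ) * v i k := by
      intro k
      have h := congrArg (fun w : EuclideanSpace ℝ (Fin 3) => w k) (b.sum_repr (WithLp.toLp 2 ξ))
      rw [Fin.sum_univ_three] at h ⊢
      simp only [b.repr_apply_apply, PiLp.inner_apply, RCLike.inner_apply, conj_trivial, PiLp.add_apply,
        PiLp.smul_apply, PiLp.toLp_apply, smul_eq_mul] at h
      rw [← h]
      simp [dotProduct, hv, mul_comm]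
    have hxifun : ξ = c0 • v 0 + c1 • v 1 + c2 • v 2 := by
      funext k
      rw [expand k, Fin.sum_univ_three]
      simp [hc0, hc1, hc2]
    have hExi : E.mulVec ξ = (c0 * lam 0) • v 0 + (c1 * lam 1) • v 1 + (c2 * lam 2) • v 2 := by
      rw [hxifun, mulVec_add, mulVec_add, mulVec_smul, mulVec_smul, mulVec_smul,
        heig 0, heig 1, heig 2, smul_smul, smul_smul, smul_smul]
    have hEExi : (E * E).mulVec ξ =
        (c0 * lam 0 ^ 2) • v 0 + (c1 * lam 1 ^ 2) • v 1 + (c2 * lam 2 ^ 2) • v 2 := by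
      rw [← mulVec_mulVec, hExi, mulVec_add, mulVec_add, mulVec_smul, mulVec_smul, mulVec_smul,
        heig 0, heig 1, heig 2, smul_smul, smul_smul, smul_smul,
        show c0 * lam 0 * lam 0 = c0 * lam 0 ^ 2 by ring,
        show c1 * lam 1 * lam 1 = c1 * lam 1 ^ 2 by ring,
        show c2 * lam 2 * lam 2 = c2 * lam 2 ^ 2 by ring]
    have hDne : (v 0 ×₃ v 1) ⬝ᵥ v 2 ≠ 0 := by
      set M : Matrix (Fin 3) (Fin 3) ℝ := Matrix.of ![v 0, v 1, v 2] with hM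
      have hMo : M * Mᵀ = 1 := by
        ext i j
        have hentry : (M * Mᵀ) i j = v i ⬝ᵥ v j := by
          simp only [Matrix.mul_apply, Matrix.transpose_apply, dotProduct, Fin.sum_univ_three, hM]
          fin_cases i <;> fin_cases j <;> simp
        rw [hentry, orth i j, Matrix.one_apply]
      have hdet2 : M.det * M.det = 1 := by
        have := congrArg Matrix.det hMo
        rwa [Matrix.det_mul, Matrix.det_transpose, Matrix.det_one] at this
      have hDdet : (v 0 ×₃ v 1) ⬝ᵥ v 2 = M.det := by
        rw [Matrix.det_fin_three]
        simp only [hM, crossProduct, dotProduct, Fin.sum_univ_three, Matrix.of_apply,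
          Matrix.cons_val_zero, Matrix.cons_val_one, Matrix.head_cons, Matrix.cons_val_two,
          Matrix.tail_cons, LinearMap.mk₂_apply]
        ring
      intro hzero
      rw [hDdet] at hzero
      rw [hzero, mul_zero] at hdet2
      exact zero_ne_one hdet2
    have hprod : c0 * c1 * c2 * ((lam 0 - lam 1) * (lam 1 - lam 2) * (lam 2 - lam 0)) *
        ((v 0 ×₃ v 1) ⬝ᵥ v 2) = 0 := by
      rw [← key_identity' (v 0) (v 1) (v 2) c0 c1 c2 (lam 0) (lam 1) (lam 2), ← hExi, ← hEExi,
        ← hxifun]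
      exact h3
    have hΔ : (lam 0 - lam 1) * (lam 1 - lam 2) * (lam 2 - lam 0) ≠ 0 :=
      mul_ne_zero (mul_ne_zero (sub_ne_zero.mpr h01) (sub_ne_zero.mpr h12))
        (sub_ne_zero.mpr fun h => h02 h.symm)
    have hc012 : c0 * c1 * c2 = 0 := by
      rcases mul_eq_zero.mp hprod with h | h
      · rcases mul_eq_zero.mp h with h' | h'
        · exact h'
        · exact absurd h' hΔ
      · exact absurd h hDne
    rcases mul_eq_zero.mp hc012 with h | h
    · rcases mul_eq_zero.mp h with h' | h'
      · exact ⟨v 0, lam 0, by rw [o00]; exact one_ne_zero, heig 0, h'⟩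
      · exact ⟨v 1, lam 1, by rw [o11]; exact one_ne_zero, heig 1, h'⟩
    · exact ⟨v 2, lam 2, by rw [o22]; exact one_ne_zero, heig 2, h⟩
  obtain ⟨u, c, hne, heq, hperp⟩ := main
  obtain ⟨u', h1', h2', h3', _⟩ := normalize_lemma' E u c ξ ξ hne heq hperp hperp
  exact ⟨u', c, h1', h2', h3'⟩

private lemma dot_self_ne_zero' (w : Fin 3 → ℝ) (hw : w ≠ 0) : w ⬝ᵥ w ≠ 0 := by
  have hk : w 0 ≠ 0 ∨ w 1 ≠ 0 ∨ w 2 ≠ 0 := by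
    by_contra hc
    push_neg at hc
    exact hw (funext fun i => by fin_cases i <;> simp [hc.1, hc.2.1, hc.2.2])
  simp only [dotProduct, Fin.sum_univ_three]
  rcases hk with h | h | h <;> intro hc <;>
    nlinarith [mul_self_pos.mpr h, mul_self_nonneg (w 0), mul_self_nonneg (w 1),
      mul_self_nonneg (w 2)]

private lemma triple_cross' (a b c : Fin 3 → ℝ) :
    a ×₃ (b ×₃ c) = (a ⬝ᵥ c) • b - (a ⬝ᵥ b) • c := by
  funext k
  fin_cases k <;>
    simp [crossProduct, dotProduct, Fin.sum_univ_three, Pi.sub_apply, Pi.smul_apply,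
      smul_eq_mul] <;> ring

theorem exists_CP_basis_of_invariants_vanish
    (ξ η : Fin 3 → ℝ) (E : Matrix (Fin 3) (Fin 3) ℝ) (hE : E.IsSymm)
    (h1 : (ξ ×₃ η) ⬝ᵥ E.mulVec ξ = 0)
    (h2 : (ξ ×₃ η) ⬝ᵥ E.mulVec η = 0)
    (h3 : (ξ ×₃ E.mulVec ξ) ⬝ᵥ (E * E).mulVec ξ = 0)
    (h4 : (η ×₃ E.mulVec η) ⬝ᵥ (E * E).mulVec η = 0) :
    ∃ R : Matrix (Fin 3) (Fin 3) ℝ, R * Rᵀ = 1 ∧ R.det = 1 ∧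
      R.mulVec ξ 1 = 0 ∧ R.mulVec η 1 = 0 ∧
      (R * E * Rᵀ) 0 1 = 0 ∧ (R * E * Rᵀ) 1 2 = 0 := by
  have hsym : ∀ a b : Fin 3 → ℝ, a ⬝ᵥ E.mulVec b = E.mulVec a ⬝ᵥ b := by
    intro a b
    rw [Matrix.dotProduct_mulVec, ← Matrix.mulVec_transpose, hE.eq]
  by_cases hcross : ξ ×₃ η = 0
  · by_cases hxi : ξ = 0
    · obtain ⟨u, c, hu, heig, hperp⟩ := exists_unit_eigen_perp' E hE η h4
      exact reduce_lemma' ξ η E hE u c hu heig (by simp [hxi]) hperp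
    · obtain ⟨u, c, hu, heig, hperp⟩ := exists_unit_eigen_perp' E hE ξ h3
      obtain ⟨t, ht⟩ : ∃ t : ℝ, η = t • ξ := by
        apply parallel_of_cross_eq_zero' η ξ hxi
        rw [← cross_anticomm, hcross, neg_zero]
      refine reduce_lemma' ξ η E hE u c hu heig hperp ?_
      rw [ht, dotProduct_smul, hperp, smul_zero]
  · set p := ξ ×₃ η with hp
    have hv1 : E.mulVec p ⬝ᵥ ξ = 0 := by rw [← hsym]; exact h1
    have hv2 : E.mulVec p ⬝ᵥ η = 0 := by rw [← hsym]; exact h2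
    have hzero : (E.mulVec p) ×₃ p = 0 := by
      rw [hp, triple_cross', hv1, hv2, zero_smul, zero_smul, sub_zero]
    obtain ⟨k, hk⟩ := parallel_of_cross_eq_zero' (E.mulVec p) p hcross hzero
    have hpξ : p ⬝ᵥ ξ = 0 := by rw [hp, dotProduct_comm]; exact dot_self_cross ξ η
    have hpη : p ⬝ᵥ η = 0 := by rw [hp, dotProduct_comm]; exact dot_cross_self ξ η
    obtain ⟨u, hu1, hu2, hu3, hu4⟩ :=
      normalize_lemma' E p k ξ η (dot_self_ne_zero' p hcross) hk hpξ hpη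
    exact reduce_lemma' ξ η E hE u k hu1 hu2 hu3 hu4
end

section
/- Let V(K₀, 𝐊) = ξ₀K₀ + η₀₀K₀² + 𝐊ᵀE𝐊 with E = diag(μ₁,μ₂,μ₃), μ₁ ≥ μ₂ ≥ μ₃, η₀₀ > 0, μₐ + η₀₀ > 0 for a=1,2,3, ξ₀ < 0, μ₃ < 0. Then on the forward light cone {K₀ = |𝐊|, K₀ > 0} the minimum of V is attained at K₀ = K₃ = -ξ₀/(2(η₀₀+μ₃)), K₁ = K₂ = 0 (up to rotation in any degenerate eigenspace), and at this point the space-like vector satisfies -𝐊 ≠ 𝐊, i.e., 𝐊 ≠ 0. -/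
open Matrix

theorem typeI_vacuum_breaks_CP
    (ξ₀ η₀₀ μ₁ μ₂ μ₃ : ℝ)
    (hord : μ₁ ≥ μ₂ ∧ μ₂ ≥ μ₃)
    (hη : 0 < η₀₀)
    (hμη : 0 < μ₁ + η₀₀ ∧ 0 < μ₂ + η₀₀ ∧ 0 < μ₃ + η₀₀)
    (hξ : ξ₀ < 0) (hμ₃ : μ₃ < 0)
    (V : ℝ → (Fin 3 → ℝ) → ℝ)
    (hV : V = fun K0 K => ξ₀ * K0 + η₀₀ * K0 ^ 2 +
      K ⬝ᵥ (Matrix.diagonal ![μ₁, μ₂, μ₃]).mulVec K)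
    (Kstar : Fin 3 → ℝ)
    (hKstar : Kstar = ![0, 0, -ξ₀ / (2 * (η₀₀ + μ₃))]) :
    (0 < -ξ₀ / (2 * (η₀₀ + μ₃)) ∧
      (-ξ₀ / (2 * (η₀₀ + μ₃))) ^ 2 = Kstar ⬝ᵥ Kstar) ∧
    (∀ (K0 : ℝ) (K : Fin 3 → ℝ), 0 < K0 → K0 ^ 2 = K ⬝ᵥ K →
      V (-ξ₀ / (2 * (η₀₀ + μ₃))) Kstar ≤ V K0 K) ∧
    Kstar ≠ 0 := by
  have ha : 0 < η₀₀ + μ₃ := by linarith [hμη.2.2]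
  set t : ℝ := -ξ₀ / (2 * (η₀₀ + μ₃)) with ht
  have htpos : 0 < t := div_pos (by linarith) (by linarith)
  refine ⟨⟨htpos, ?_⟩, ?_, ?_⟩
  · subst hKstar
    simp [dotProduct, Fin.sum_univ_three]
    ring
  · intro K0 K hK0 hKK
    have hd : ∀ (w : Fin 3 → ℝ),
        w ⬝ᵥ (Matrix.diagonal ![μ₁, μ₂, μ₃]).mulVec w
          = μ₁ * w 0 ^ 2 + μ₂ * w 1 ^ 2 + μ₃ * w 2 ^ 2 := by
      intro w
      simp [dotProduct, Matrix.mulVec, Fin.sum_univ_three, Matrix.diagonal]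
      ring
    have hKK' : K0 ^ 2 = K 0 ^ 2 + K 1 ^ 2 + K 2 ^ 2 := by
      simpa [dotProduct, Fin.sum_univ_three, sq] using hKK
    subst hV hKstar
    simp only [hd]
    have h1 : μ₃ * (K 0 ^ 2 + K 1 ^ 2 + K 2 ^ 2) ≤
        μ₁ * K 0 ^ 2 + μ₂ * K 1 ^ 2 + μ₃ * K 2 ^ 2 := by
      nlinarith [sq_nonneg (K 0), sq_nonneg (K 1), hord.1, hord.2]
    have ht2 : ξ₀ = -(2 * (η₀₀ + μ₃)) * t := by
      have h2a : (2 * (η₀₀ + μ₃)) ≠ 0 := by positivity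
      rw [ht, neg_mul, mul_div_assoc', mul_comm, mul_div_assoc, div_self h2a]
      ring
    have key : ξ₀ * t + (η₀₀ + μ₃) * t ^ 2 ≤ ξ₀ * K0 + (η₀₀ + μ₃) * K0 ^ 2 := by
      nlinarith [sq_nonneg (K0 - t), ha]
    simp only [Matrix.cons_val_zero, Matrix.cons_val_one, Matrix.head_cons,
      Matrix.cons_val_two, Matrix.tail_cons]
    nlinarith [key, h1]
  · subst hKstar
    intro h
    have := congrFun h 2
    simp at this
    exact absurd this (ne_of_gt htpos)
end
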